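/- Explicit preimage of a permutation under the string-to-permutation map: let σ ∈ S_n have descent set D(σ) = {n₁ < n₂ < … < n_d}, set n₀ = 0 and n_{d+1} = n, let 𝒜 = {0 < 1 < … < d}, and let ω = 0^{n₁−n₀} 1^{n₂−n₁} ⋯ d^{n_{d+1}−n_d} ∈ 𝒜ⁿ be the weakly increasing string in which the letter r occurs n_{r+1} − n_r times. Then the string λ ∈ 𝒜ⁿ defined by λ_{σ(i)} = ω_i for i = 1,…,n satisfies f_𝒜(λ) = σ, and the weakly increasing rearrangement of λ is ω. -/
import Mathlib


noncomputable section

/-- `σ` fixes all positions `≥ n` (i.e. `σ ∈ S_n ⊆ S_∞`, positions 0-indexed). -/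
def IsPermOn (n : ℕ) (σ : Equiv.Perm ℕ) : Prop := ∀ a, n ≤ a → σ a = a

/-- `τ` is the standardization of the string `w`; the map `f_𝒜` sends `w` to `τ⁻¹`. -/
def IsStandardization {A : Type*} [LinearOrder A] {n : ℕ} (w : Fin n → A)
    (τ : Equiv.Perm ℕ) : Prop :=
  IsPermOn n τ ∧ ∀ p q : Fin n, p < q → (w p ≤ w q ↔ τ (p : ℕ) < τ (q : ℕ))

/-- The descent set of `σ ∈ S_n` as a finset (0-indexed: `a` corresponds to the
1-indexed descent `a + 1`). -/
def descFinset (n : ℕ) (σ : Equiv.Perm ℕ) : Finset ℕ :=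
  (Finset.range n).filter fun a => σ (a + 1) < σ a

lemma mono_aux (σ : Equiv.Perm ℕ) (i : ℕ) :
    ∀ j, i ≤ j → (∀ a, i ≤ a → a < j → ¬ σ (a+1) < σ a) → σ i ≤ σ j := by
  intro j
  induction j with
  | zero => intro hij _; interval_cases i; exact le_rfl
  | succ j ih =>
    intro hij h
    rcases Nat.lt_or_ge i (j+1) with hlt | hge
    · have hij' : i ≤ j := Nat.lt_succ_iff.mp hlt
      have h1 : σ i ≤ σ j := ih hij' (fun a ha ha' => h a ha (by omega))
      have h2 : ¬ σ (j+1) < σ j := h j hij' (Nat.lt_succ_self j)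
      exact h1.trans (not_lt.mp h2)
    · have : i = j + 1 := le_antisymm hij hge
      simp [this]

lemma strict_aux (σ : Equiv.Perm ℕ) {i j : ℕ} (hij : i < j)
    (h : ∀ a, i ≤ a → a < j → ¬ σ (a+1) < σ a) : σ i < σ j := by
  have := mono_aux σ i j hij.le h
  exact lt_of_le_of_ne this (fun he => absurd (σ.injective he) (by omega))

lemma desc_card_lt (n : ℕ) (σ : Equiv.Perm ℕ) {i j a : ℕ}
    (ha : a ∈ descFinset n σ) (h1 : i ≤ a) (h2 : a < j) :
    ((descFinset n σ).filter fun b => b < i).card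
      < ((descFinset n σ).filter fun b => b < j).card := by
  apply Finset.card_lt_card
  constructor
  · intro b hb
    simp only [Finset.mem_filter] at hb ⊢
    exact ⟨hb.1, by omega⟩
  · intro hsub
    have : a ∈ (descFinset n σ).filter fun b => b < j :=
      Finset.mem_filter.mpr ⟨ha, h2⟩
    have := hsub this
    simp only [Finset.mem_filter] at this
    omega

/-- **Explicit preimage of a permutation under the string-to-permutation map.**
Let `σ ∈ S_n` have descent set `D(σ) = {n₁ < ⋯ < n_d}`, and let
`ω ∈ {0, …, d}ⁿ` be the weakly increasing string whose letter at position `p` is the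
number of descents `< p + 1` (so that the letter `r` occurs `n_{r+1} − n_r` times).
Then the string `λ` defined by `λ_{σ(i)} = ω_i`, i.e. `λ_p = ω_{σ⁻¹(p)}`, satisfies
`f(λ) = σ`, and the weakly increasing rearrangement of `λ` is `ω` (i.e. `ω` is weakly
increasing and `λ`, `ω` have the same multiset of letters). -/
theorem explicit_preimage_of_permutation
    (n : ℕ) (σ : Equiv.Perm ℕ) (hσ : IsPermOn n σ) :
    -- ω, read at `Fin n` positions
    (Monotone fun p : Fin n =>
      ((descFinset n σ).filter fun a => a < (p : ℕ)).card) ∧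
    -- same content
    (Multiset.map
        (fun p : Fin n =>
          ((descFinset n σ).filter fun a => a < σ⁻¹ (p : ℕ)).card)
        Finset.univ.val
      = Multiset.map
        (fun p : Fin n =>
          ((descFinset n σ).filter fun a => a < (p : ℕ)).card)
        Finset.univ.val) ∧
    -- f(λ) = σ
    (∃ τ : Equiv.Perm ℕ,
      IsStandardization
        (fun p : Fin n =>
          ((descFinset n σ).filter fun a => a < σ⁻¹ (p : ℕ)).card) τ ∧
      τ⁻¹ = σ) := by
  -- σ and σ⁻¹ map [0,n) into [0,n)
  have hinvlt : ∀ p : ℕ, p < n → σ⁻¹ p < n := by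
    intro p hp
    by_contra h
    have := hσ _ (not_lt.mp h)
    have : p = σ⁻¹ p := by
      conv_lhs => rw [← σ.apply_symm_apply p]
      exact this
    omega
  have hlt : ∀ p : ℕ, p < n → σ p < n := by
    intro p hp
    by_contra h
    have h2 := hσ _ (not_lt.mp h)
    have : σ p = p := σ.injective (by rw [h2])
    omega
  refine ⟨?_, ?_, ?_⟩
  · intro p q hpq
    apply Finset.card_le_card
    intro b hb
    simp only [Finset.mem_filter] at hb ⊢
    exact ⟨hb.1, lt_of_lt_of_le hb.2 (by exact_mod_cast hpq)⟩
  · -- content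
    set g : Fin n → ℕ := fun p => ((descFinset n σ).filter fun a => a < (p : ℕ)).card
    let e : Fin n ≃ Fin n :=
      { toFun := fun p => ⟨σ⁻¹ p, hinvlt p p.2⟩
        invFun := fun p => ⟨σ p, hlt p p.2⟩
        left_inv := fun p => by simp
        right_inv := fun p => by simp }
    have key : (fun p : Fin n =>
        ((descFinset n σ).filter fun a => a < σ⁻¹ (p : ℕ)).card) = g ∘ e := rfl
    rw [key, ← Multiset.map_map]
    congr 1
    have : Finset.univ.map e.toEmbedding = Finset.univ := Finset.map_univ_equiv e
    calc Multiset.map (⇑e) Finset.univ.val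
        = (Finset.univ.map e.toEmbedding).val := rfl
      _ = Finset.univ.val := by rw [this]
  · refine ⟨σ⁻¹, ⟨?_, ?_⟩, by simp⟩
    · intro a ha
      have := hσ a ha
      exact σ.symm_apply_eq.mpr this.symm
    · intro p q hpq
      simp only
      set i := σ⁻¹ (p : ℕ) with hi
      set j := σ⁻¹ (q : ℕ) with hj
      have hin : i < n := hinvlt _ p.2
      have hjn : j < n := hinvlt _ q.2
      have hσi : σ i = (p : ℕ) := σ.apply_symm_apply _
      have hσj : σ j = (q : ℕ) := σ.apply_symm_apply _
      have hne : i ≠ j := by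
        intro h
        have h2 : (p : ℕ) = (q : ℕ) := Equiv.injective σ⁻¹ h
        have : p = q := Fin.ext h2
        exact absurd this (ne_of_lt hpq)
      have hωmono : ∀ {u v : ℕ}, u ≤ v →
          ((descFinset n σ).filter fun a => a < u).card
            ≤ ((descFinset n σ).filter fun a => a < v).card := by
        intro u v huv
        apply Finset.card_le_card
        intro b hb
        simp only [Finset.mem_filter] at hb ⊢
        exact ⟨hb.1, by omega⟩
      constructor
      · intro hle
        by_contra hji
        have hji' : j < i := by omega
        -- there is a descent in [j, i)
        by_cases hdesc : ∃ a, a ∈ descFinset n σ ∧ j ≤ a ∧ a < i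
        · obtain ⟨a, ha, h1, h2⟩ := hdesc
          have := desc_card_lt n σ ha h1 h2
          omega
        · push_neg at hdesc
          have : σ j < σ i := by
            apply strict_aux σ hji'
            intro a h1 h2 hd
            have := hdesc a (Finset.mem_filter.mpr ⟨Finset.mem_range.mpr (by omega), hd⟩) h1
            omega
          rw [hσi, hσj] at this
          omega
      · intro hij
        exact hωmono hij.le

end
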